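/- For each nonzero integer n, every root λ of the characteristic polynomial F_n(λ) = λ^3 + (1/κ + 2 i n u_s) λ^2 + (-u_s^2 n^2 + b ρ_s n^2 + μ n^2/(κ ρ_s) + 2 i u_s n/κ) λ + (-u_s^2 n^2/κ + b ρ_s n^2/κ + i μ u_s n^3/(κ ρ_s)) has strictly negative real part. -/

import Mathlib

private lemma aux_stmt5 (κ ρs μ A nus n2 x y : ℝ) (hκ : 0 < κ) (hρs : 0 < ρs)
    (hμ : 0 < μ) (hA : 0 < A) (hn2 : 0 < n2)
    (hre : ρs*κ*(x*(x^2-y^2+A) - y*(2*x*y)) + n2*μ*x + ρs*(x^2-y^2+A)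
            + ρs*κ*nus*(2*x*y) = 0)
    (him : ρs*κ*(x*(2*x*y) + y*(x^2-y^2+A)) + n2*μ*y + ρs*(2*x*y)
            - ρs*κ*nus*(x^2-y^2+A) = 0) :
    x < 0 := by
  by_contra hx0
  push_neg at hx0
  have hstar : ρs*κ*x*((x^2-y^2+A)^2+(2*x*y)^2) + n2*μ*x*(x^2+y^2) + n2*μ*A*x
      + ρs*((x^2-y^2+A)^2+(2*x*y)^2) = 0 := by
    linear_combination (x^2-y^2+A)*hre + (2*x*y)*him
  have t1 : 0 ≤ ρs*κ*x*((x^2-y^2+A)^2+(2*x*y)^2) := by positivity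
  have t2 : 0 ≤ n2*μ*x*(x^2+y^2) := by positivity
  have t3 : 0 ≤ n2*μ*A*x := by positivity
  have hw2 : (x^2-y^2+A)^2 + (2*x*y)^2 ≤ 0 := by nlinarith
  have hwr0 : x^2-y^2+A = 0 := by
    have h4 : (x^2-y^2+A)^2 = 0 :=
      le_antisymm (by nlinarith [sq_nonneg (2*x*y)]) (sq_nonneg _)
    exact pow_eq_zero_iff (two_ne_zero) |>.mp h4
  have hwi0 : 2*x*y = 0 := by
    have h4 : (2*x*y)^2 = 0 :=
      le_antisymm (by nlinarith [sq_nonneg (x^2-y^2+A)]) (sq_nonneg _)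
    exact pow_eq_zero_iff (two_ne_zero) |>.mp h4
  have hS : (x^2-y^2+A)^2 + (2*x*y)^2 = 0 := by rw [hwr0, hwi0]; ring
  have hstar' : n2*μ*x*(x^2+y^2) + n2*μ*A*x = 0 := by
    linear_combination hstar - (ρs*κ*x + ρs)*hS
  have hxle : x ≤ 0 := by nlinarith [mul_pos (mul_pos hn2 hμ) hA]
  have hx : x = 0 := le_antisymm hxle hx0
  have hy2 : y^2 = A := by linear_combination -hwr0 + x*hx
  have h5 : n2*μ*y = 0 := by
    linear_combination him - (ρs*κ*y - ρs*κ*nus)*hwr0 - (2*ρs*κ*x*y + 2*ρs*y)*hx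
  have hy0 : y = 0 := by
    rcases mul_eq_zero.mp h5 with h | h
    · exact absurd h (by positivity)
    · exact h
  rw [hy0] at hy2
  nlinarith [hy2, hA]

/-- Every root of the characteristic polynomial `F_n` has strictly negative real part. -/
theorem stmt_5 (us ρs b μ κ : ℝ) (hus : 0 < us) (hρs : 0 < ρs) (hb : 0 < b)
    (hμ : 0 < μ) (hκ : 0 < κ) (n : ℤ) (hn : n ≠ 0) :
    ∀ lam : ℂ,
      lam^3 + ((1/κ : ℝ) + 2*Complex.I*n*us) * lam^2
        + ((-us^2*n^2 + b*ρs*n^2 + μ*n^2/(κ*ρs) : ℝ) + 2*Complex.I*us*n/(κ:ℝ)) * lam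
        + ((-us^2*n^2/κ + b*ρs*n^2/κ : ℝ) + Complex.I*μ*us*n^3/((κ:ℝ)*ρs)) = 0 →
      lam.re < 0 := by
  intro lam h
  have hκc : (κ:ℂ) ≠ 0 := by exact_mod_cast ne_of_gt hκ
  have hρc : (ρs:ℂ) ≠ 0 := by exact_mod_cast ne_of_gt hρs
  push_cast at h
  field_simp at h
  rw [Complex.ext_iff] at h
  obtain ⟨h1, h2⟩ := h
  simp only [Complex.add_re, Complex.add_im, Complex.mul_re, Complex.mul_im,
    Complex.neg_re, Complex.neg_im, Complex.I_re, Complex.I_im, Complex.ofReal_re,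
    Complex.ofReal_im, Complex.zero_re, Complex.zero_im, Complex.one_re, Complex.one_im,
    Complex.intCast_re, Complex.intCast_im, Complex.re_ofNat, Complex.im_ofNat,
    pow_succ, pow_zero, one_mul] at h1 h2
  set X := lam.re
  set T := lam.im
  have hC : κ^5*ρs ≠ 0 := by positivity
  have hre : κ^5*ρs*(ρs*κ*(X*(X^2-(T+(n:ℝ)*us)^2+(n:ℝ)^2*(b*ρs)) - (T+(n:ℝ)*us)*(2*X*(T+(n:ℝ)*us)))
      + (n:ℝ)^2*μ*X + ρs*(X^2-(T+(n:ℝ)*us)^2+(n:ℝ)^2*(b*ρs))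
      + ρs*κ*((n:ℝ)*us)*(2*X*(T+(n:ℝ)*us))) = 0 := by linear_combination (κ^5*ρs) * h1
  have him : κ^5*ρs*(ρs*κ*(X*(2*X*(T+(n:ℝ)*us)) + (T+(n:ℝ)*us)*(X^2-(T+(n:ℝ)*us)^2+(n:ℝ)^2*(b*ρs)))
      + (n:ℝ)^2*μ*(T+(n:ℝ)*us) + ρs*(2*X*(T+(n:ℝ)*us))
      - ρs*κ*((n:ℝ)*us)*(X^2-(T+(n:ℝ)*us)^2+(n:ℝ)^2*(b*ρs))) = 0 := by linear_combination (κ^5*ρs) * h2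
  have hre' := (mul_eq_zero.mp hre).resolve_left hC
  have him' := (mul_eq_zero.mp him).resolve_left hC
  have hnR : ((n:ℝ))^2 > 0 := by
    have : (n:ℝ) ≠ 0 := Int.cast_ne_zero.mpr hn
    positivity
  have hA : (0:ℝ) < (n:ℝ)^2*(b*ρs) := by
    have : (n:ℝ) ≠ 0 := Int.cast_ne_zero.mpr hn
    positivity
  exact aux_stmt5 κ ρs μ ((n:ℝ)^2*(b*ρs)) ((n:ℝ)*us) ((n:ℝ)^2) X (T+(n:ℝ)*us)
    hκ hρs hμ hA hnR hre' him'
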